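/- For all integers q ≥ p ≥ 2 there exists a constant C > 0 (depending only on p and q) such that for every sufficiently large m there exists a graph G with exactly m edges, which is a disjoint union of cliques, satisfying r(K_{p,q}, G) ≤ C · m^{p/(p+1)}. -/

import Mathlib

open SimpleGraph

/-- `G.ContainsCopy H` means the graph `G` contains a subgraph isomorphic to `H`,
i.e. there is an injective graph homomorphism from `H` into `G`. -/
def SimpleGraph.ContainsCopy {α β : Type*} (G : SimpleGraph α) (H : SimpleGraph β) : Prop :=
  ∃ f : H →g G, Function.Injective f

/-- `RamseyProp n H G` : every graph `Γ` on `n` vertices contains a copy of `H`,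
or its complement contains a copy of `G`. -/
def RamseyProp {α β : Type*} (n : ℕ) (H : SimpleGraph α) (G : SimpleGraph β) : Prop :=
  ∀ Γ : SimpleGraph (Fin n), Γ.ContainsCopy H ∨ Γᶜ.ContainsCopy G

/-- The Ramsey number `r(H, G)` : the least positive `n` such that every graph on `n`
vertices contains a copy of `H` or its complement contains a copy of `G`. -/
noncomputable def ramseyNumber {α β : Type*} (H : SimpleGraph α) (G : SimpleGraph β) : ℕ :=
  sInf {n : ℕ | 0 < n ∧ RamseyProp n H G}


/-- block index of a vertex of the clique union graph -/
def blk {k s r : ℕ} : (Fin k × Fin s) ⊕ (Fin r × Fin 2) → Fin k ⊕ Fin r :=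
  Sum.elim (fun v => Sum.inl v.1) (fun v => Sum.inr v.1)

/-- disjoint union of `k` cliques of size `s` and `r` cliques of size 2 -/
def cliqueUnion (k s r : ℕ) : SimpleGraph ((Fin k × Fin s) ⊕ (Fin r × Fin 2)) where
  Adj x y := x ≠ y ∧ blk x = blk y
  symm := ⟨fun x y h => ⟨h.1.symm, h.2.symm⟩⟩
  loopless := ⟨fun x h => h.1 rfl⟩

instance (k s r : ℕ) : DecidableRel (cliqueUnion k s r).Adj :=
  fun x y => inferInstanceAs (Decidable (x ≠ y ∧ blk x = blk y))

lemma walk_blk {k s r : ℕ} {u v} (w : (cliqueUnion k s r).Walk u v) : blk u = blk v := by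
  induction w with
  | nil => rfl
  | cons h _ ih => exact h.2.trans ih

lemma cliqueUnion_cliques (k s r : ℕ) :
    ∀ u v, (cliqueUnion k s r).Reachable u v → u ≠ v → (cliqueUnion k s r).Adj u v := by
  intro u v hr hne
  obtain ⟨w⟩ := hr
  exact ⟨hne, walk_blk w⟩

lemma cliqueUnion_nbr_inl (k s r : ℕ) (a : Fin k) (b : Fin s) :
    (cliqueUnion k s r).neighborFinset (Sum.inl (a, b))
      = (Finset.univ.erase b).image (fun b' => Sum.inl (a, b')) := by
  ext y
  rw [SimpleGraph.mem_neighborFinset]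
  rcases y with ⟨a', b'⟩ | ⟨a', b'⟩ <;>
    simp only [SimpleGraph.mem_neighborFinset, cliqueUnion, blk, Finset.mem_image,
      Finset.mem_erase, Finset.mem_univ, and_true, Sum.elim_inl, Sum.elim_inr, ne_eq,
      Sum.inl.injEq, Prod.mk.injEq, reduceCtorEq, and_false, exists_false, iff_false,
      not_and, Sum.inr.injEq] <;> aesop

lemma cliqueUnion_nbr_inr (k s r : ℕ) (a : Fin r) (b : Fin 2) :
    (cliqueUnion k s r).neighborFinset (Sum.inr (a, b))
      = (Finset.univ.erase b).image (fun b' => Sum.inr (a, b')) := by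
  ext y
  rw [SimpleGraph.mem_neighborFinset]
  rcases y with ⟨a', b'⟩ | ⟨a', b'⟩ <;>
    simp only [SimpleGraph.mem_neighborFinset, cliqueUnion, blk, Finset.mem_image,
      Finset.mem_erase, Finset.mem_univ, and_true, Sum.elim_inl, Sum.elim_inr, ne_eq,
      Sum.inl.injEq, Prod.mk.injEq, reduceCtorEq, and_false, exists_false, iff_false,
      not_and, Sum.inr.injEq] <;> aesop

lemma cliqueUnion_degree_inl (k s r : ℕ) (a : Fin k) (b : Fin s) :
    (cliqueUnion k s r).degree (Sum.inl (a, b)) = s - 1 := by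
  rw [SimpleGraph.degree, cliqueUnion_nbr_inl, Finset.card_image_of_injective _
    (fun x y h => by simpa using h),
    Finset.card_erase_of_mem (Finset.mem_univ b), Finset.card_univ, Fintype.card_fin]

lemma cliqueUnion_degree_inr (k s r : ℕ) (a : Fin r) (b : Fin 2) :
    (cliqueUnion k s r).degree (Sum.inr (a, b)) = 1 := by
  rw [SimpleGraph.degree, cliqueUnion_nbr_inr, Finset.card_image_of_injective _
    (fun x y h => by simpa using h),
    Finset.card_erase_of_mem (Finset.mem_univ b), Finset.card_univ, Fintype.card_fin]

lemma cliqueUnion_edgeCount (k s r : ℕ) (hs : 1 ≤ s) :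
    (cliqueUnion k s r).edgeFinset.card = k * s.choose 2 + r := by
  have hdeg : ∑ v, (cliqueUnion k s r).degree v = k * (s * (s - 1)) + r * 2 := by
    rw [Fintype.sum_sum_type]
    have h1 : ∀ x : Fin k × Fin s, (cliqueUnion k s r).degree (Sum.inl x) = s - 1 :=
      fun ⟨a, b⟩ => cliqueUnion_degree_inl k s r a b
    have h2 : ∀ x : Fin r × Fin 2, (cliqueUnion k s r).degree (Sum.inr x) = 1 :=
      fun ⟨a, b⟩ => cliqueUnion_degree_inr k s r a b
    rw [Finset.sum_congr rfl (fun x _ => h1 x), Finset.sum_congr rfl (fun x _ => h2 x),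
      Finset.sum_const, Finset.sum_const, Finset.card_univ, Finset.card_univ,
      Fintype.card_prod, Fintype.card_prod, Fintype.card_fin, Fintype.card_fin,
      Fintype.card_fin, Fintype.card_fin, smul_eq_mul, smul_eq_mul]
    have : k * s * (s - 1) = k * (s * (s - 1)) := by ring
    omega
  have hsum := SimpleGraph.sum_degrees_eq_twice_card_edges (cliqueUnion k s r)
  rw [hdeg] at hsum
  have hc2 : 2 * s.choose 2 = s * (s - 1) := by
    rw [Nat.choose_two_right]
    have hev : Even (s * (s - 1)) := by
      rcases Nat.even_or_odd s with h | h
      · exact h.mul_right _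
      · exact Even.mul_left (by rcases h with ⟨t, ht⟩; exact ⟨t, by omega⟩) _
    obtain ⟨t, ht⟩ := hev
    omega
  have h3 : 2 * (k * s.choose 2) = k * (s * (s - 1)) := by
    rw [← hc2]; ring
  omega

section AuxKST

open Finset

variable {V : Type*} [Fintype V] [DecidableEq V] {p q : ℕ}
variable (Γ : SimpleGraph V) [DecidableRel Γ.Adj]

lemma common_nbrs_le
    (hfree : ¬ Γ.ContainsCopy (completeBipartiteGraph (Fin p) (Fin q)))
    (A : Finset V) (S : Finset V) (hS : S.card = p) :
    (A.filter (fun v => ∀ u ∈ S, Γ.Adj v u)).card ≤ q - 1 := by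
  by_contra hcon
  push_neg at hcon
  have hq : q ≤ (A.filter (fun v => ∀ u ∈ S, Γ.Adj v u)).card := by omega
  obtain ⟨T, hTsub, hT⟩ := Finset.exists_subset_card_eq hq
  have hTadj : ∀ v ∈ T, ∀ u ∈ S, Γ.Adj v u := fun v hv u hu =>
    (Finset.mem_filter.1 (hTsub hv)).2 u hu
  have hdisj : ∀ x, x ∈ S → x ∈ T → False := fun x hxS hxT =>
    Γ.irrefl (hTadj x hxT x hxS)
  let eS : Fin p ≃ S := (S.equivFinOfCardEq hS).symm
  let eT : Fin q ≃ T := (T.equivFinOfCardEq hT).symm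
  let f : Fin p ⊕ Fin q → V := Sum.elim (fun i => (eS i : V)) (fun j => (eT j : V))
  have hmap : ∀ a b, (completeBipartiteGraph (Fin p) (Fin q)).Adj a b → Γ.Adj (f a) (f b) := by
    rintro (i | j) (i' | j') hadj
    · simp at hadj
    · exact (Γ.adj_symm (hTadj _ (eT j').2 _ (eS i).2))
    · exact hTadj _ (eT j).2 _ (eS i').2
    · simp at hadj
  have hinj : Function.Injective f := by
    rintro (i | j) (i' | j') h <;> simp only [f, Sum.elim_inl, Sum.elim_inr] at h
    · exact congrArg Sum.inl (eS.injective (Subtype.ext h))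
    · exact absurd (eS i).2 (fun hx => hdisj _ hx (h ▸ (eT j').2))
    · exact absurd (eS i').2 (fun hx => hdisj _ hx (h.symm ▸ (eT j).2))
    · exact congrArg Sum.inr (eT.injective (Subtype.ext h))
  exact hfree ⟨⟨f, fun {a b} h => hmap a b h⟩, hinj⟩

lemma kst_sum (A : Finset V) (hAq : ∀ S ∈ A.powersetCard p, (A.filter (fun v => ∀ u ∈ S, Γ.Adj v u)).card ≤ q - 1) :
    ∑ v ∈ A, ((A.filter (Γ.Adj v)).card).choose p ≤ (q - 1) * (A.card.choose p) := by
  have key : ∀ v, ((A.filter (Γ.Adj v)).card).choose p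
      = ∑ S ∈ A.powersetCard p, (if ∀ u ∈ S, Γ.Adj v u then 1 else 0) := by
    intro v
    rw [← Finset.card_powersetCard]
    have : (A.filter (Γ.Adj v)).powersetCard p
        = (A.powersetCard p).filter (fun S => ∀ u ∈ S, Γ.Adj v u) := by
      ext S
      simp only [Finset.mem_powersetCard, Finset.mem_filter, Finset.subset_iff,
        Finset.mem_filter]
      constructor
      · rintro ⟨h1, h2⟩
        exact ⟨⟨fun x hx => (h1 hx).1, h2⟩, fun u hu => (h1 hu).2⟩
      · rintro ⟨⟨h1, h2⟩, h3⟩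
        exact ⟨fun x hx => ⟨h1 hx, h3 x hx⟩, h2⟩
    rw [this, Finset.card_filter]
  calc ∑ v ∈ A, ((A.filter (Γ.Adj v)).card).choose p
      = ∑ v ∈ A, ∑ S ∈ A.powersetCard p, (if ∀ u ∈ S, Γ.Adj v u then 1 else 0) :=
        Finset.sum_congr rfl fun v _ => key v
    _ = ∑ S ∈ A.powersetCard p, ∑ v ∈ A, (if ∀ u ∈ S, Γ.Adj v u then 1 else 0) :=
        Finset.sum_comm
    _ = ∑ S ∈ A.powersetCard p, (A.filter (fun v => ∀ u ∈ S, Γ.Adj v u)).card :=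
        Finset.sum_congr rfl fun S _ => (Finset.card_filter _ _).symm
    _ ≤ ∑ S ∈ A.powersetCard p, (q - 1) := Finset.sum_le_sum hAq
    _ = (A.powersetCard p).card * (q - 1) := by rw [Finset.sum_const, smul_eq_mul]
    _ = (q - 1) * (A.card.choose p) := by rw [Finset.card_powersetCard, Nat.mul_comm]
lemma exists_low_deg (A : Finset V) (hA : A.Nonempty) (N D : ℕ)
    (hAq : ∀ S ∈ A.powersetCard p, (A.filter (fun v => ∀ u ∈ S, Γ.Adj v u)).card ≤ q - 1)
    (hN : A.card ≤ N) (hD : (q - 1) * N ^ (p - 1) < (D + 2 - p) ^ p) (hp : 1 ≤ p) :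
    ∃ v ∈ A, (A.filter (Γ.Adj v)).card ≤ D := by
  by_contra hcon
  push_neg at hcon
  set a := A.card with ha
  have hapos : 0 < a := Finset.card_pos.2 hA
  have hsum : a * ((D + 1).choose p) ≤ ∑ v ∈ A, ((A.filter (Γ.Adj v)).card).choose p := by
    calc a * ((D + 1).choose p) = ∑ _v ∈ A, (D + 1).choose p := by
          rw [Finset.sum_const, smul_eq_mul]
      _ ≤ _ := Finset.sum_le_sum fun v hv => Nat.choose_le_choose p (hcon v hv)
  have h1 : a * ((D + 1).choose p) ≤ (q - 1) * a.choose p := hsum.trans (kst_sum Γ A hAq)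
  have h2 : (D + 2 - p) ^ p ≤ p.factorial * ((D + 1).choose p) := by
    have := Nat.pow_sub_le_descFactorial (D + 1) p
    rwa [Nat.descFactorial_eq_factorial_mul_choose, show D + 1 + 1 = D + 2 from rfl] at this
  have h3 : p.factorial * a.choose p ≤ a ^ p := by
    rw [← Nat.descFactorial_eq_factorial_mul_choose]
    exact Nat.descFactorial_le_pow a p
  have h4 : a ^ p ≤ N ^ (p - 1) * a := by
    calc a ^ p = a ^ (p - 1) * a := by
          rw [← pow_succ]; congr 1; omega
      _ ≤ N ^ (p - 1) * a := Nat.mul_le_mul_right a (Nat.pow_le_pow_left hN _)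
  have chain : a * (D + 2 - p) ^ p ≤ (q - 1) * N ^ (p - 1) * a := by
    calc a * (D + 2 - p) ^ p ≤ a * (p.factorial * ((D + 1).choose p)) :=
          Nat.mul_le_mul_left a h2
      _ = p.factorial * (a * ((D + 1).choose p)) := by ring
      _ ≤ p.factorial * ((q - 1) * a.choose p) := Nat.mul_le_mul_left _ h1
      _ = (q - 1) * (p.factorial * a.choose p) := by ring
      _ ≤ (q - 1) * a ^ p := Nat.mul_le_mul_left _ h3
      _ ≤ (q - 1) * (N ^ (p - 1) * a) := Nat.mul_le_mul_left _ h4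
      _ = (q - 1) * N ^ (p - 1) * a := by ring
  have hlt : (q - 1) * N ^ (p - 1) * a < (D + 2 - p) ^ p * a :=
    (Nat.mul_lt_mul_right hapos).2 hD
  have := chain.trans_lt hlt
  rw [Nat.mul_comm] at this
  exact lt_irrefl _ this
lemma exists_indep
    (hfree : ¬ Γ.ContainsCopy (completeBipartiteGraph (Fin p) (Fin q)))
    (N D : ℕ) (hD : (q - 1) * N ^ (p - 1) < (D + 2 - p) ^ p) (hp : 1 ≤ p) :
    ∀ (s : ℕ) (A : Finset V), A.card ≤ N → s * (D + 1) ≤ A.card →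
    ∃ I, I ⊆ A ∧ I.card = s ∧ ∀ u ∈ I, ∀ v ∈ I, ¬ Γ.Adj u v := by
  intro s
  induction s with
  | zero =>
    intro A _ _
    exact ⟨∅, Finset.empty_subset A, Finset.card_empty, by simp⟩
  | succ s ih =>
    intro A hN hcard
    rw [Nat.succ_mul] at hcard
    have hA : A.Nonempty := by
      rw [← Finset.card_pos]; omega
    obtain ⟨v, hvA, hvdeg⟩ := exists_low_deg Γ A hA N D
      (fun S hS => common_nbrs_le Γ hfree A S (Finset.mem_powersetCard.1 hS).2) hN hD hp
    set B := A \ insert v (A.filter (Γ.Adj v)) with hB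
    have hBsub : B ⊆ A := Finset.sdiff_subset
    have hBcard : s * (D + 1) ≤ B.card := by
      have h1 : A.card - (insert v (A.filter (Γ.Adj v))).card ≤ B.card :=
        Finset.le_card_sdiff _ _
      have h2 : (insert v (A.filter (Γ.Adj v))).card ≤ D + 1 := by
        have := Finset.card_insert_le v (A.filter (Γ.Adj v))
        omega
      have := Finset.card_le_card hBsub
      omega
    obtain ⟨I', hI'sub, hI'card, hI'indep⟩ := ih B ((Finset.card_le_card hBsub).trans hN) hBcard
    have hvB : v ∉ B := by simp [hB]
    have hvI' : v ∉ I' := fun h => hvB (hI'sub h)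
    refine ⟨insert v I', ?_, ?_, ?_⟩
    · intro x hx
      rcases Finset.mem_insert.1 hx with rfl | hx
      · exact hvA
      · exact hBsub (hI'sub hx)
    · rw [Finset.card_insert_of_notMem hvI', hI'card]
    · have hnoadj : ∀ w ∈ I', ¬ Γ.Adj v w := by
        intro w hw hadj
        have hwB := hI'sub hw
        rw [hB, Finset.mem_sdiff] at hwB
        exact hwB.2 (Finset.mem_insert.2 (Or.inr (Finset.mem_filter.2 ⟨hwB.1, hadj⟩)))
      intro x hx y hy
      rcases Finset.mem_insert.1 hx with hxv | hx' <;>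
        rcases Finset.mem_insert.1 hy with hyv | hy'
      · subst hxv; subst hyv; exact Γ.irrefl
      · subst hxv; exact hnoadj y hy'
      · subst hyv; exact fun h => hnoadj x hx' (Γ.adj_symm h)
      · exact hI'indep x hx' y hy'

lemma exists_indep_family
    (hfree : ¬ Γ.ContainsCopy (completeBipartiteGraph (Fin p) (Fin q)))
    (N D : ℕ) (hD : (q - 1) * N ^ (p - 1) < (D + 2 - p) ^ p) (hp : 1 ≤ p) :
    ∀ (k c : ℕ) (A : Finset V), A.card ≤ N → k * c + c * (D + 1) ≤ A.card →
    ∃ I : Fin k → Finset V, (∀ i, I i ⊆ A) ∧ (∀ i, (I i).card = c) ∧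
      (∀ i, ∀ u ∈ I i, ∀ w ∈ I i, ¬ Γ.Adj u w) ∧ ∀ i j, i ≠ j → Disjoint (I i) (I j) := by
  intro k
  induction k with
  | zero =>
    intro c A _ _
    exact ⟨fun i => i.elim0, fun i => i.elim0, fun i => i.elim0, fun i => i.elim0,
      fun i _ _ => i.elim0⟩
  | succ k ih =>
    intro c A hN hcard
    obtain ⟨I0, hI0sub, hI0card, hI0indep⟩ :=
      exists_indep Γ hfree N D hD hp c A hN (by rw [Nat.succ_mul] at hcard; omega)
    set B := A \ I0 with hB
    have hBsub : B ⊆ A := Finset.sdiff_subset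
    rw [Nat.succ_mul] at hcard
    have hBcard : k * c + c * (D + 1) ≤ B.card := by
      have h1 : A.card - I0.card ≤ B.card := Finset.le_card_sdiff _ _
      have := Finset.card_le_card hBsub
      omega
    obtain ⟨I', hI'sub, hI'card, hI'indep, hI'disj⟩ :=
      ih c B ((Finset.card_le_card hBsub).trans hN) hBcard
    have hdisjB : ∀ j, Disjoint I0 (I' j) := by
      intro j
      rw [Finset.disjoint_left]
      intro x hx hx'
      have := hI'sub j hx'
      rw [hB, Finset.mem_sdiff] at this
      exact this.2 hx
    refine ⟨Fin.cons I0 I', ?_, ?_, ?_, ?_⟩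
    · intro i
      induction i using Fin.cases with
      | zero => simpa using hI0sub
      | succ i => simpa using (hI'sub i).trans hBsub
    · intro i
      induction i using Fin.cases with
      | zero => simpa using hI0card
      | succ i => simpa using hI'card i
    · intro i
      induction i using Fin.cases with
      | zero => simpa using hI0indep
      | succ i => simpa using hI'indep i
    · intro i j hij
      induction i using Fin.cases with
      | zero =>
        induction j using Fin.cases with
        | zero => exact absurd rfl hij
        | succ j => simpa using hdisjB j
      | succ i =>
        induction j using Fin.cases with
        | zero => simpa using (hdisjB i).symm
        | succ j =>
          have : i ≠ j := fun h => hij (by rw [h])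
          simpa using hI'disj i j this
/-- From two disjoint independent families, embed the clique union into the complement. -/
lemma embed_cliqueUnion (k s r : ℕ)
    (I : Fin k → Finset V) (J : Fin r → Finset V)
    (hIcard : ∀ i, (I i).card = s) (hJcard : ∀ j, (J j).card = 2)
    (hIind : ∀ i, ∀ u ∈ I i, ∀ w ∈ I i, ¬ Γ.Adj u w)
    (hJind : ∀ j, ∀ u ∈ J j, ∀ w ∈ J j, ¬ Γ.Adj u w)
    (hIdisj : ∀ i j, i ≠ j → Disjoint (I i) (I j))
    (hJdisj : ∀ i j, i ≠ j → Disjoint (J i) (J j))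
    (hIJ : ∀ i j, Disjoint (I i) (J j)) :
    Γᶜ.ContainsCopy (cliqueUnion k s r) := by
  classical
  let eI : (i : Fin k) → Fin s ≃ (I i) := fun i => ((I i).equivFinOfCardEq (hIcard i)).symm
  let eJ : (j : Fin r) → Fin 2 ≃ (J j) := fun j => ((J j).equivFinOfCardEq (hJcard j)).symm
  let f : (Fin k × Fin s) ⊕ (Fin r × Fin 2) → V :=
    Sum.elim (fun x => (eI x.1 x.2 : V)) (fun x => (eJ x.1 x.2 : V))
  have hmem : ∀ x, (match blk x with
    | Sum.inl a => f x ∈ I a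
    | Sum.inr a => f x ∈ J a : Prop) := by
    rintro (⟨a, b⟩ | ⟨a, b⟩)
    · exact (eI a b).2
    · exact (eJ a b).2
  have hinj : Function.Injective f := by
    rintro (⟨a, b⟩ | ⟨a, b⟩) (⟨a', b'⟩ | ⟨a', b'⟩) h <;>
      simp only [f, Sum.elim_inl, Sum.elim_inr] at h
    · by_cases ha : a = a'
      · subst ha
        have := (eI a).injective (Subtype.ext h)
        rw [this]
      · exact (Finset.disjoint_left.1 (hIdisj a a' ha) (eI a b).2 (h ▸ (eI a' b').2)).elim
    · exact (Finset.disjoint_left.1 (hIJ a a') (eI a b).2 (h ▸ (eJ a' b').2)).elim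
    · exact (Finset.disjoint_left.1 (hIJ a' a) (h ▸ (eI a' b').2) ((eJ a b).2)).elim
    · by_cases ha : a = a'
      · subst ha
        have := (eJ a).injective (Subtype.ext h)
        rw [this]
      · exact (Finset.disjoint_left.1 (hJdisj a a' ha) (eJ a b).2 (h ▸ (eJ a' b').2)).elim
  refine ⟨⟨f, ?_⟩, hinj⟩
  rintro x y ⟨hne, hblk⟩
  have hfne : f x ≠ f y := fun h => hne (hinj h)
  rw [SimpleGraph.compl_adj]
  refine ⟨hfne, ?_⟩
  rcases x with ⟨a, b⟩ | ⟨a, b⟩ <;> rcases y with ⟨a', b'⟩ | ⟨a', b'⟩ <;>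
    simp only [blk, Sum.elim_inl, Sum.elim_inr] at hblk
  · have ha : a = a' := by simpa using hblk
    subst ha
    exact hIind a _ (eI a b).2 _ (eI a b').2
  · exact absurd hblk (by simp)
  · exact absurd hblk (by simp)
  · have ha : a = a' := by simpa using hblk
    subst ha
    exact hJind a _ (eJ a b).2 _ (eJ a b').2

lemma ramsey_step (n k s r D : ℕ)
    (hp : 1 ≤ p)
    (hD : (q - 1) * n ^ (p - 1) < (D + 2 - p) ^ p)
    (h1 : k * s + s * (D + 1) ≤ n)
    (h2 : k * s + (r * 2 + 2 * (D + 1)) ≤ n) :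
    RamseyProp n (completeBipartiteGraph (Fin p) (Fin q)) (cliqueUnion k s r) := by
  intro Γ
  classical
  by_cases hfree : Γ.ContainsCopy (completeBipartiteGraph (Fin p) (Fin q))
  · exact Or.inl hfree
  right
  have hcardV : (Finset.univ : Finset (Fin n)).card = n := by simp
  obtain ⟨I, hIsub, hIcard, hIind, hIdisj⟩ :=
    exists_indep_family Γ hfree n D hD hp k s Finset.univ (by simp) (by omega)
  set A2 : Finset (Fin n) := Finset.univ \ Finset.univ.biUnion (fun i : Fin k => I i) with hA2
  have hA2card : r * 2 + 2 * (D + 1) ≤ A2.card := by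
    have hb : (Finset.univ.biUnion (fun i : Fin k => I i)).card ≤ k * s := by
      calc (Finset.univ.biUnion (fun i : Fin k => I i)).card
          ≤ ∑ i : Fin k, (I i).card := Finset.card_biUnion_le
        _ = k * s := by simp [hIcard, Finset.sum_const, mul_comm]
    have h3 := Finset.le_card_sdiff (Finset.univ.biUnion (fun i : Fin k => I i)) Finset.univ
    rw [← hA2] at h3
    omega
  obtain ⟨J, hJsub, hJcard, hJind, hJdisj⟩ :=
    exists_indep_family Γ hfree n D hD hp r 2 A2 (Finset.card_le_univ A2 |>.trans (by simp))
      (by omega)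
  have hIJ : ∀ i j, Disjoint (I i) (J j) := by
    intro i j
    rw [Finset.disjoint_left]
    intro x hx hx'
    have hxA2 := hJsub j hx'
    rw [hA2, Finset.mem_sdiff] at hxA2
    exact hxA2.2 (Finset.mem_biUnion.2 ⟨i, Finset.mem_univ i, hx⟩)
  exact embed_cliqueUnion Γ k s r I J hIcard hJcard hIind hJind hIdisj hJdisj hIJ

end AuxKST

open Finset in
theorem stmt_13 (p q : ℕ) (hp : 2 ≤ p) (hpq : p ≤ q) :
    ∃ C : ℝ, 0 < C ∧ ∃ M : ℕ, ∀ m : ℕ, M ≤ m →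
      ∃ (β : Type) (_ : Fintype β) (G : SimpleGraph β),
        G.edgeSet.ncard = m ∧
        (∀ u v, G.Reachable u v → u ≠ v → G.Adj u v) ∧
        (ramseyNumber (completeBipartiteGraph (Fin p) (Fin q)) G : ℝ) ≤
          C * (m : ℝ) ^ ((p : ℝ) / (p + 1)) := by
  set K : ℕ := 3 * (p + q + 1) + 9 with hK
  refine ⟨((2 * K : ℕ) : ℝ) ^ p, by positivity, 2 ^ (p + 1), ?_⟩
  intro m hm
  -- basic real setup
  have hpR : (0:ℝ) < (p:ℝ) + 1 := by positivity
  set x : ℝ := (m : ℝ) ^ ((1:ℝ) / ((p:ℝ) + 1)) with hx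
  have hmpos : 0 < m := lt_of_lt_of_le (by positivity : 0 < 2 ^ (p + 1)) hm
  have hxpos : 0 < x := Real.rpow_pos_of_pos (by exact_mod_cast hmpos) _
  set s : ℕ := ⌊x⌋₊ with hs
  have hmR : (0:ℝ) ≤ (m:ℝ) := by positivity
  have hxm : x ^ ((p:ℝ) + 1) = (m : ℝ) := by
    rw [hx, ← Real.rpow_mul hmR]
    rw [show (1/((p:ℝ)+1)) * ((p:ℝ)+1) = 1 by field_simp]
    exact Real.rpow_one _
  have hs2 : 2 ≤ s := by
    apply Nat.le_floor
    have h2pow : ((2:ℝ)) = ((2 ^ (p+1) : ℕ) : ℝ) ^ ((1:ℝ) / ((p:ℝ) + 1)) := by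
      push_cast
      rw [← Real.rpow_natCast (2:ℝ) (p+1), ← Real.rpow_mul (by norm_num)]
      rw [show ((p+1 : ℕ) : ℝ) * ((1:ℝ)/((p:ℝ)+1)) = 1 by push_cast; field_simp]
      norm_num
    rw [show ((2:ℕ):ℝ) = (2:ℝ) by norm_num, h2pow, hx]
    apply Real.rpow_le_rpow (by positivity) (by exact_mod_cast hm) (by positivity)
  have hs1 : 1 ≤ s := by omega
  have hsx : (s : ℝ) ≤ x := Nat.floor_le hxpos.le
  have hm_lt : m < (s + 1) ^ (p + 1) := by
    have hxlt : x < (s:ℝ) + 1 := Nat.lt_floor_add_one x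
    have h1 : (m:ℝ) < ((s:ℝ) + 1) ^ ((p:ℝ) + 1) := by
      calc (m:ℝ) = x ^ ((p:ℝ)+1) := hxm.symm
        _ < ((s:ℝ)+1) ^ ((p:ℝ)+1) :=
            Real.rpow_lt_rpow hxpos.le hxlt hpR
    have h2 : ((s:ℝ) + 1) ^ ((p:ℝ) + 1) = (((s+1) ^ (p+1) : ℕ) : ℝ) := by
      push_cast
      rw [← Real.rpow_natCast ((s:ℝ)+1) (p+1)]
      push_cast
      ring_nf
    rw [h2] at h1
    exact_mod_cast h1
  -- natural number data
  set T : ℕ := s.choose 2 with hT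
  set k : ℕ := m / T with hk
  set r : ℕ := m % T with hr
  set t : ℕ := K * (s + 1) with ht
  set D : ℕ := p + q * t ^ (p - 1) with hD
  set n : ℕ := k * s + 2 * r + (s + 2) * (D + 1) with hn
  have hT2 : 2 * T = s * (s - 1) := by
    rw [hT, Nat.choose_two_right]
    have hev : Even (s * (s - 1)) := by
      rcases Nat.even_or_odd s with h | h
      · exact h.mul_right _
      · exact Even.mul_left (by rcases h with ⟨u, hu⟩; exact ⟨u, by omega⟩) _
    obtain ⟨u, hu⟩ := hev
    omega
  have hTpos : 0 < T := by
    have h21 : 2 * 1 ≤ s * (s - 1) := Nat.mul_le_mul hs2 (by omega)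
    omega
  have hkT : k * T ≤ m := by rw [hk]; exact Nat.div_mul_le_self m T
  have hmr : k * T + r = m := by rw [hk, hr, Nat.mul_comm]; exact Nat.div_add_mod m T
  have hrT : r < T := Nat.mod_lt _ hTpos
  -- (c) k * s ≤ 8 * (s+1)^p
  have hss' : s * (s - 1) + s = s * s := by
    rcases Nat.exists_eq_add_of_le hs2 with ⟨u, hu⟩
    rw [hu, show 2 + u - 1 = u + 1 by omega]
    ring
  have hss2 : s ≤ s * (s - 1) := Nat.le_mul_of_pos_right s (by omega)
  have hss : s * s ≤ 4 * T := by omega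
  have hks : k * s ≤ 8 * (s + 1) ^ p := by
    have h1 : k * s * s ≤ 4 * (k * T) := by
      calc k * s * s = k * (s * s) := by ring
        _ ≤ k * (4 * T) := Nat.mul_le_mul_left _ hss
        _ = 4 * (k * T) := by ring
    have h2 : 4 * (k * T) ≤ 4 * m := by omega
    have h3 : 4 * m ≤ 4 * (s+1)^(p+1) := by omega
    have h4 : (s+1)^(p+1) = (s+1)^p * (s+1) := by rw [pow_succ]
    have h5 : (s+1) ≤ 2 * s := by omega
    have h6 : k * s * s ≤ 8 * (s+1)^p * s := by
      calc k * s * s ≤ 4 * (s+1)^(p+1) := by omega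
        _ = 4 * ((s+1)^p * (s+1)) := by rw [h4]
        _ ≤ 4 * ((s+1)^p * (2 * s)) := by
            exact Nat.mul_le_mul_left _ (Nat.mul_le_mul_left _ h5)
        _ = 8 * (s+1)^p * s := by ring
    exact Nat.le_of_mul_le_mul_right h6 (by omega)
  -- (d)
  have h2r : 2 * r ≤ (s + 1) ^ p := by
    have : 2 * r < s * s := by omega
    have h1 : s * s ≤ (s+1)^2 := by
      have : (s+1)^2 = s*s + 2*s + 1 := by ring
      omega
    have h2 : (s+1)^2 ≤ (s+1)^p := Nat.pow_le_pow_right (by omega) hp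
    omega
  -- (e)
  have htpos : 1 ≤ t := by
    rw [ht]; have : 1 ≤ K := by omega
    nlinarith
  have htp1 : 1 ≤ t ^ (p - 1) := Nat.one_le_pow _ _ (by omega)
  have hsD : (s + 2) * (D + 1) ≤ 3 * (p + q + 1) * K ^ (p-1) * (s + 1) ^ p := by
    have hD1 : D + 1 ≤ (p + q + 1) * t ^ (p - 1) := by
      rw [hD]
      have : (p + q + 1) * t ^ (p-1) = p * t^(p-1) + q * t^(p-1) + t^(p-1) := by ring
      nlinarith [Nat.le_mul_of_pos_right p htp1]
    have hs3 : s + 2 ≤ 3 * (s + 1) := by omega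
    have htpow : t ^ (p-1) = K ^ (p-1) * (s+1) ^ (p-1) := by rw [ht, mul_pow]
    calc (s+2) * (D+1) ≤ (3 * (s+1)) * ((p+q+1) * t^(p-1)) :=
          Nat.mul_le_mul hs3 hD1
      _ = 3 * (p+q+1) * K^(p-1) * ((s+1) * (s+1)^(p-1)) := by rw [htpow]; ring
      _ = 3 * (p+q+1) * K^(p-1) * (s+1)^p := by
          congr 1
          rw [← pow_succ']
          congr 1
          omega
  -- (f) n ≤ t ^ p
  have hnt : n ≤ t ^ p := by
    have hKp : 9 + 3 * (p+q+1) * K^(p-1) ≤ K ^ p := by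
      have h1 : K ^ p = K * K ^ (p-1) := by
        rw [← pow_succ']
        congr 1
        omega
      have h2 : 1 ≤ K ^ (p-1) := Nat.one_le_pow _ _ (by omega)
      have h9 : 9 ≤ 9 * K ^ (p-1) := Nat.le_mul_of_pos_right 9 (by omega)
      calc 9 + 3*(p+q+1)*K^(p-1) ≤ 9 * K^(p-1) + 3*(p+q+1)*K^(p-1) := by omega
        _ = (3*(p+q+1) + 9) * K^(p-1) := by ring
        _ = K * K^(p-1) := by rw [← hK]
        _ = K ^ p := h1.symm
    have htK : t ^ p = K ^ p * (s+1)^p := by rw [ht, mul_pow]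
    have h2 : 1 ≤ (s+1)^p := Nat.one_le_pow _ _ (by omega)
    calc n = k * s + 2 * r + (s+2)*(D+1) := hn
      _ ≤ 8 * (s+1)^p + (s+1)^p + 3*(p+q+1)*K^(p-1) * (s+1)^p := by omega
      _ = (9 + 3*(p+q+1)*K^(p-1)) * (s+1)^p := by ring
      _ ≤ K^p * (s+1)^p := Nat.mul_le_mul_right _ hKp
      _ = t ^ p := htK.symm
  -- (g)
  have hDineq : (q - 1) * n ^ (p - 1) < (D + 2 - p) ^ p := by
    have hd2 : D + 2 - p = q * t^(p-1) + 2 := by omega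
    rw [hd2]
    calc (q-1) * n^(p-1) ≤ q^p * (t^(p-1))^p := by
          have h1 : n ^ (p-1) ≤ (t^p)^(p-1) := Nat.pow_le_pow_left hnt _
          have h2 : (t^p)^(p-1) = (t^(p-1))^p := by
            rw [← pow_mul, ← pow_mul, Nat.mul_comm]
          have h3 : q - 1 ≤ q ^ p := le_trans (by omega) (Nat.le_self_pow (by omega) q)
          calc (q-1) * n^(p-1) ≤ q^p * (t^p)^(p-1) := Nat.mul_le_mul h3 h1
            _ = q^p * (t^(p-1))^p := by rw [h2]
      _ = (q * t^(p-1))^p := (mul_pow q (t^(p-1)) p).symm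
      _ < (q * t^(p-1) + 2)^p := Nat.pow_lt_pow_left (by omega) (by omega)
  -- ramsey property
  have hram : RamseyProp n (completeBipartiteGraph (Fin p) (Fin q)) (cliqueUnion k s r) := by
    apply ramsey_step n k s r D (by omega) hDineq
    · have : s * (D+1) ≤ (s+2)*(D+1) := Nat.mul_le_mul_right _ (by omega)
      omega
    · have : 2 * (D+1) ≤ (s+2)*(D+1) := Nat.mul_le_mul_right _ (by omega)
      omega
  have hnpos : 0 < n := by
    have : 0 < (s+2)*(D+1) := Nat.mul_pos (by omega) (by omega)
    omega
  have hrle : ramseyNumber (completeBipartiteGraph (Fin p) (Fin q)) (cliqueUnion k s r) ≤ n :=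
    Nat.sInf_le ⟨hnpos, hram⟩
  refine ⟨_, inferInstance, cliqueUnion k s r, ?_, cliqueUnion_cliques k s r, ?_⟩
  · have h1 : (cliqueUnion k s r).edgeSet.ncard = (cliqueUnion k s r).edgeFinset.card := by
      rw [← SimpleGraph.coe_edgeFinset, Set.ncard_coe_finset]
    rw [h1, cliqueUnion_edgeCount k s r (by omega), ← hT]
    omega
  · -- final real bound
    have hcast : (ramseyNumber (completeBipartiteGraph (Fin p) (Fin q))
        (cliqueUnion k s r) : ℝ) ≤ (n : ℝ) := by exact_mod_cast hrle
    have hnR : (n : ℝ) ≤ ((t : ℝ)) ^ p := by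
      have h := (Nat.cast_le (α := ℝ)).2 hnt
      rwa [Nat.cast_pow] at h
    have ht2K : (t : ℝ) ≤ ((2 * K : ℕ) : ℝ) * (s : ℝ) := by
      have hnat : t ≤ 2 * K * s := by
        calc t = K * (s+1) := ht
          _ ≤ K * (2 * s) := Nat.mul_le_mul_left _ (by omega)
          _ = 2 * K * s := by ring
      exact_mod_cast hnat
    have hxp : (x : ℝ) ^ p = (m : ℝ) ^ ((p:ℝ) / ((p:ℝ) + 1)) := by
      rw [hx, ← Real.rpow_natCast ((m:ℝ) ^ ((1:ℝ)/((p:ℝ)+1))) p,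
        ← Real.rpow_mul (by positivity)]
      congr 1
      field_simp
    calc (ramseyNumber (completeBipartiteGraph (Fin p) (Fin q)) (cliqueUnion k s r) : ℝ)
        ≤ (n : ℝ) := hcast
      _ ≤ (t : ℝ) ^ p := hnR
      _ ≤ (((2 * K : ℕ) : ℝ) * (s : ℝ)) ^ p := by
          apply pow_le_pow_left₀ (by positivity) ht2K
      _ = ((2 * K : ℕ) : ℝ) ^ p * (s : ℝ) ^ p := by rw [mul_pow]
      _ ≤ ((2 * K : ℕ) : ℝ) ^ p * x ^ p := by
          apply mul_le_mul_of_nonneg_left _ (by positivity)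
          exact pow_le_pow_left₀ (by positivity) hsx p
      _ = ((2 * K : ℕ) : ℝ) ^ p * (m : ℝ) ^ ((p:ℝ) / ((p:ℝ) + 1)) := by rw [hxp]
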